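/- If a finite union of tasks is relentlessly enabled on a path, then at least one of the tasks in the union is relentlessly enabled on the path. -/

import Mathlib

/-- A transition system: states `S`, transitions `Tr`, with source/target maps
and a set of initial states. -/
structure TS (S Tr : Type) where
  source : Tr → S
  target : Tr → S
  init : Set S

/-- A (finite or infinite) path in a transition system: `len` is the number of
transitions (`⊤` for an infinite path); states are indexed `0..len` and
transitions `0..len-1`. -/
structure TSPath {S Tr : Type} (G : TS S Tr) where
  len : ℕ∞
  state : ℕ → S
  trans : ℕ → Tr
  src_ok : ∀ i : ℕ, (i : ℕ∞) < len → G.source (trans i) = state i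
  tgt_ok : ∀ i : ℕ, (i : ℕ∞) < len → G.target (trans i) = state (i + 1)

variable {S Tr : Type}

/-- A task `T` is enabled in a state `s` if some transition in `T` has source `s`. -/
def TS.enabled (G : TS S Tr) (T : Set Tr) (s : S) : Prop :=
  ∃ t ∈ T, G.source t = s

/-- A path is rooted if it starts in an initial state. -/
def TSPath.rooted {G : TS S Tr} (π : TSPath G) : Prop :=
  π.state 0 ∈ G.init

/-- The path visits the set of states `Ge`. -/
def TSPath.visits {G : TS S Tr} (π : TSPath G) (Ge : Set S) : Prop :=
  ∃ i : ℕ, (i : ℕ∞) ≤ π.len ∧ π.state i ∈ Ge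

/-- The task `T` occurs in the suffix of `π` starting at index `k`. -/
def TSPath.occursFrom {G : TS S Tr} (π : TSPath G) (T : Set Tr) (k : ℕ) : Prop :=
  ∃ i : ℕ, k ≤ i ∧ (i : ℕ∞) < π.len ∧ π.trans i ∈ T

/-- `T` is perpetually enabled on the suffix of `π` starting at index `k`:
enabled in every state of that suffix. -/
def TSPath.perpEnabledFrom {G : TS S Tr} (π : TSPath G) (T : Set Tr) (k : ℕ) : Prop :=
  ∀ i : ℕ, k ≤ i → (i : ℕ∞) ≤ π.len → G.enabled T (π.state i)

/-- `T` is relentlessly enabled on the suffix of `π` starting at index `k`: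
every suffix of that suffix contains a state in which `T` is enabled. -/
def TSPath.relEnabledFrom {G : TS S Tr} (π : TSPath G) (T : Set Tr) (k : ℕ) : Prop :=
  ∀ j : ℕ, k ≤ j → (j : ℕ∞) ≤ π.len →
    ∃ i : ℕ, j ≤ i ∧ (i : ℕ∞) ≤ π.len ∧ G.enabled T (π.state i)

/-- Weak fairness: for every suffix, each task perpetually enabled on that
suffix occurs in it. -/
def TSPath.weaklyFair {G : TS S Tr} (π : TSPath G) (𝒯 : Set (Set Tr)) : Prop :=
  ∀ T ∈ 𝒯, ∀ k : ℕ, (k : ℕ∞) ≤ π.len → π.perpEnabledFrom T k → π.occursFrom T k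

/-- Strong fairness: for every suffix, each task relentlessly enabled on that
suffix occurs in it. -/
def TSPath.stronglyFair {G : TS S Tr} (π : TSPath G) (𝒯 : Set (Set Tr)) : Prop :=
  ∀ T ∈ 𝒯, ∀ k : ℕ, (k : ℕ∞) ≤ π.len → π.relEnabledFrom T k → π.occursFrom T k

/-- A path is progressing if it is infinite or its last state has no outgoing
transition. -/
def TSPath.progressing {G : TS S Tr} (π : TSPath G) : Prop :=
  π.len = ⊤ ∨ ∃ n : ℕ, π.len = (n : ℕ∞) ∧ ∀ t : Tr, G.source t ≠ π.state n

/-- If a finite union of tasks is relentlessly enabled on a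
path, then at least one of the tasks is relentlessly enabled on the path. -/
theorem relEnabled_of_finite_union (G : TS S Tr) (π : TSPath G) (n : ℕ)
    (Ts : Fin n → Set Tr) (h : π.relEnabledFrom (⋃ i, Ts i) 0) :
    ∃ i : Fin n, π.relEnabledFrom (Ts i) 0 := by
  by_contra hc
  push_neg at hc
  simp only [TSPath.relEnabledFrom, not_forall, not_exists] at hc
  -- for each i, get a cutoff j i beyond which Ts i is never enabled
  choose j hj0 hjlen hjno using hc
  set J : ℕ := Finset.univ.sup j with hJ
  have hJlen : (J : ℕ∞) ≤ π.len := by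
    rcases Nat.eq_zero_or_pos n with hn | hn
    · have : J = 0 := by
        subst hn; simp [hJ]
      rw [this]; exact zero_le
    · obtain ⟨i0⟩ := Fin.pos_iff_nonempty.mp hn
      obtain ⟨i, _, hi⟩ := Finset.exists_mem_eq_sup Finset.univ
        ⟨i0, Finset.mem_univ i0⟩ j
      rw [hJ, hi]; exact hjlen i
  obtain ⟨m, hJm, hmlen, t, ht, hts⟩ := h J (Nat.zero_le J) hJlen
  obtain ⟨i, hti⟩ := Set.mem_iUnion.mp ht
  exact hjno i m ⟨le_trans (Finset.le_sup (Finset.mem_univ i)) hJm, hmlen, t, hti, hts⟩
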